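/- Let 𝒯 be a pretriangulated category with a four-periodic semiorthogonal decomposition 𝒯 = ⟨𝒜, ℬ⟩ = ⟨ℬ, 𝒞⟩ = ⟨𝒞, 𝒟⟩ = ⟨𝒟, 𝒜⟩. Let i_𝒜, i_ℬ, i_𝒞, i_𝒟 denote the inclusion functors, let R_𝒜 : 𝒯 → 𝒜 be a right adjoint to i_𝒜, let R_𝒞 : 𝒯 → 𝒞 be a right adjoint to i_𝒞, let L_ℬ : 𝒯 → ℬ be a left adjoint to i_ℬ, and let L_𝒟 : 𝒯 → 𝒟 be a left adjoint to i_𝒟 (such adjoints exist by the semiorthogonal decompositions). Then for every object B of ℬ there is a distinguished triangle (i_ℬ L_ℬ i_𝒜 R_𝒜 i_ℬ)(B) → i_ℬ(B) → (i_ℬ L_ℬ i_𝒟 L_𝒟 i_ℬ)(B) → (i_ℬ L_ℬ i_𝒜 R_𝒜 i_ℬ)(B)[1] in 𝒯, and for every object A of 𝒜 there is a distinguished triangle (i_𝒜 R_𝒜 i_𝒞 R_𝒞 i_𝒜)(A) → i_𝒜(A) → (i_𝒜 R_𝒜 i_ℬ L_ℬ i_𝒜)(A) → (i_𝒜 R_𝒜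 i_𝒞 R_𝒞 i_𝒜)(A)[1] in 𝒯. -/

import Mathlib

open CategoryTheory Category Limits Pretriangulated

universe v u

namespace CategoryTheory.Triangulated

/-- The structure `Triangulated.Subcategory` of the older Mathlib (removed since), restated
with its old definition. -/
structure Subcategory (C : Type*) [Category C] [HasZeroObject C] [HasShift C ℤ]
    [Preadditive C] [∀ (n : ℤ), (shiftFunctor C n).Additive] [Pretriangulated C] where
  P : C → Prop
  zero' : ∃ (Z : C) (_ : IsZero Z), P Z
  shift (X : C) (n : ℤ) : P X → P (X⟦n⟧)
  ext₂' (T : Triangle C) : T ∈ distTriang C → P T.obj₁ → P T.obj₃ →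
    ObjectProperty.isoClosure P T.obj₂


namespace Subcategory

lemma ext₃ {C : Type*} [Category C] [HasZeroObject C] [HasShift C ℤ]
    [Preadditive C] [∀ (n : ℤ), (shiftFunctor C n).Additive] [Pretriangulated C]
    (S : Subcategory C) [ObjectProperty.IsClosedUnderIsomorphisms S.P]
    (T : Triangle C) (hT : T ∈ distTriang C) (h₁ : S.P T.obj₁) (h₂ : S.P T.obj₂) :
    S.P T.obj₃ := by
  have := S.ext₂' _ (rot_of_distTriang _ hT) h₂ (S.shift _ 1 h₁)
  rw [ObjectProperty.isoClosure_eq_self] at this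
  exact this

end Subcategory

end CategoryTheory.Triangulated

section Helpers

variable {𝒯 : Type u} [Category.{v} 𝒯] [HasZeroObject 𝒯] [HasShift 𝒯 ℤ] [Preadditive 𝒯]
    [∀ (n : ℤ), (shiftFunctor 𝒯 n).Additive] [Pretriangulated 𝒯]

lemma contra_bij {X Y Z : 𝒯} {f : X ⟶ Y} {g : Y ⟶ Z} {h : Z ⟶ X⟦(1:ℤ)⟧}
    (hT : Triangle.mk f g h ∈ distTriang 𝒯) (E : 𝒯)
    (h0 : ∀ (t : X ⟶ E), t = 0) (h1 : ∀ (t : X⟦(1:ℤ)⟧ ⟶ E), t = 0) :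
    Function.Bijective (fun (s : Z ⟶ E) => g ≫ s) := by
  constructor
  · intro s₁ s₂ hs
    dsimp at hs
    have hz : g ≫ (s₁ - s₂) = 0 := by rw [Preadditive.comp_sub, hs, sub_self]
    obtain ⟨t, ht⟩ : ∃ t : X⟦(1:ℤ)⟧ ⟶ E, s₁ - s₂ = h ≫ t := Triangle.yoneda_exact₃ _ hT (s₁ - s₂) hz
    rw [h1 t, comp_zero] at ht
    exact sub_eq_zero.mp ht
  · intro t
    obtain ⟨s, hs⟩ := Triangle.yoneda_exact₂ _ hT t (h0 _)
    exact ⟨s, hs.symm⟩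

lemma co_bij {X Y Z : 𝒯} {f : X ⟶ Y} {g : Y ⟶ Z} {h : Z ⟶ X⟦(1:ℤ)⟧}
    (hT : Triangle.mk f g h ∈ distTriang 𝒯) (E : 𝒯)
    (h0 : ∀ (t : E ⟶ Z), t = 0) (h1 : ∀ (t : E ⟶ Z⟦(-1:ℤ)⟧), t = 0) :
    Function.Bijective (fun (s : E ⟶ X) => s ≫ f) := by
  constructor
  · intro s₁ s₂ hs
    dsimp at hs
    have hz : (s₁ - s₂) ≫ f = 0 := by rw [Preadditive.sub_comp, hs, sub_self]
    obtain ⟨t, ht⟩ := Triangle.coyoneda_exact₂ _ (inv_rot_of_distTriang _ hT) (s₁ - s₂) hz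
    rw [h1 t] at ht
    exact sub_eq_zero.mp (ht.trans zero_comp)
  · intro t
    obtain ⟨s, hs⟩ := Triangle.coyoneda_exact₂ _ hT t (h0 _)
    exact ⟨s, hs.symm⟩

lemma contra_bij_shift {X Y Z : 𝒯} {f : X ⟶ Y} {g : Y ⟶ Z} {h : Z ⟶ X⟦(1:ℤ)⟧}
    (hT : Triangle.mk f g h ∈ distTriang 𝒯) (E : 𝒯)
    (h0 : ∀ (t : X⟦(1:ℤ)⟧ ⟶ E), t = 0) (h1 : ∀ (t : X⟦(1:ℤ)⟧⟦(1:ℤ)⟧ ⟶ E), t = 0) :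
    Function.Bijective (fun (s : Z⟦(1:ℤ)⟧ ⟶ E) => g⟦(1:ℤ)⟧' ≫ s) := by
  have hT3 : Triangle.mk (-f⟦(1:ℤ)⟧') (-g⟦(1:ℤ)⟧') (-h⟦(1:ℤ)⟧') ∈ distTriang 𝒯 :=
    rot_of_distTriang _ (rot_of_distTriang _ (rot_of_distTriang _ hT))
  have hb := contra_bij hT3 E h0 h1
  have heq : (fun (s : Z⟦(1:ℤ)⟧ ⟶ E) => g⟦(1:ℤ)⟧' ≫ s)
      = (fun x => -x) ∘ (fun (s : Z⟦(1:ℤ)⟧ ⟶ E) => (-g⟦(1:ℤ)⟧') ≫ s) := by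
    funext s
    simp
  rw [heq]
  exact Function.Bijective.comp (Equiv.neg _).bijective hb

lemma co_bij_shift {X Y Z : 𝒯} {f : X ⟶ Y} {g : Y ⟶ Z} {h : Z ⟶ X⟦(1:ℤ)⟧}
    (hT : Triangle.mk f g h ∈ distTriang 𝒯) (E : 𝒯)
    (h0 : ∀ (t : E ⟶ Z⟦(1:ℤ)⟧), t = 0) (h1 : ∀ (t : E ⟶ Z⟦(1:ℤ)⟧⟦(-1:ℤ)⟧), t = 0) :
    Function.Bijective (fun (s : E ⟶ X⟦(1:ℤ)⟧) => s ≫ f⟦(1:ℤ)⟧') := by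
  have hT3 : Triangle.mk (-f⟦(1:ℤ)⟧') (-g⟦(1:ℤ)⟧') (-h⟦(1:ℤ)⟧') ∈ distTriang 𝒯 :=
    rot_of_distTriang _ (rot_of_distTriang _ (rot_of_distTriang _ hT))
  have hb := co_bij hT3 E h0 h1
  have heq : (fun (s : E ⟶ X⟦(1:ℤ)⟧) => s ≫ f⟦(1:ℤ)⟧')
      = (fun x => -x) ∘ (fun (s : E ⟶ X⟦(1:ℤ)⟧) => s ≫ (-f⟦(1:ℤ)⟧')) := by
    funext s
    simp
  rw [heq]
  exact Function.Bijective.comp (Equiv.neg _).bijective hb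

lemma uniq_iso_contra (P : 𝒯 → Prop) {D Y W : 𝒯} (hY : P Y) (hW : P W)
    (β : D ⟶ Y) (η : D ⟶ W)
    (hβ : ∀ E, P E → Function.Bijective (fun (s : Y ⟶ E) => β ≫ s))
    (hη : ∀ E, P E → Function.Bijective (fun (s : W ⟶ E) => η ≫ s)) :
    ∃ (e : Y ≅ W), β ≫ e.hom = η := by
  obtain ⟨φ, hφ⟩ := (hβ W hW).2 η
  obtain ⟨ψ, hψ⟩ := (hη Y hY).2 β
  dsimp at hφ hψ
  refine ⟨⟨φ, ψ, ?_, ?_⟩, hφ⟩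
  · apply (hβ Y hY).1
    dsimp
    rw [← assoc, hφ, hψ, comp_id]
  · apply (hη W hW).1
    dsimp
    rw [← assoc, hψ, hφ, comp_id]

lemma uniq_iso_co (P : 𝒯 → Prop) {D Y W : 𝒯} (hY : P Y) (hW : P W)
    (β : Y ⟶ D) (η : W ⟶ D)
    (hβ : ∀ E, P E → Function.Bijective (fun (s : E ⟶ Y) => s ≫ β))
    (hη : ∀ E, P E → Function.Bijective (fun (s : E ⟶ W) => s ≫ η)) :
    ∃ (e : Y ≅ W), e.hom ≫ η = β := by
  obtain ⟨φ, hφ⟩ := (hη Y hY).2 β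
  obtain ⟨ψ, hψ⟩ := (hβ W hW).2 η
  dsimp at hφ hψ
  refine ⟨⟨φ, ψ, ?_, ?_⟩, hφ⟩
  · apply (hβ Y hY).1
    dsimp
    rw [assoc, hψ, hφ, id_comp]
  · apply (hη W hW).1
    dsimp
    rw [assoc, hφ, hψ, id_comp]

lemma unit_bij {P : 𝒯 → Prop} (L : 𝒯 ⥤ ObjectProperty.FullSubcategory P)
    (adj : L ⊣ ObjectProperty.ι P) (D : 𝒯) (E : 𝒯) (hE : P E) :
    Function.Bijective
      (fun (s : (ObjectProperty.ι P).obj (L.obj D) ⟶ E) => adj.unit.app D ≫ s) :=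
  by
    have h := ((ObjectProperty.fullyFaithfulι P).homEquiv.symm.trans
      (adj.homEquiv D ⟨E, hE⟩)).bijective
    show Function.Bijective (fun (s : (ObjectProperty.ι P).obj (L.obj D) ⟶
      (ObjectProperty.ι P).obj ⟨E, hE⟩) => adj.unit.app D ≫ s)
    exact h

lemma counit_bij {P : 𝒯 → Prop} (R : 𝒯 ⥤ ObjectProperty.FullSubcategory P)
    (adj : ObjectProperty.ι P ⊣ R) (D : 𝒯) (E : 𝒯) (hE : P E) :
    Function.Bijective
      (fun (s : E ⟶ (ObjectProperty.ι P).obj (R.obj D)) => s ≫ adj.counit.app D) :=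
  by
    have h := ((ObjectProperty.fullyFaithfulι P).homEquiv.symm.trans
      (adj.homEquiv ⟨E, hE⟩ D).symm).bijective
    show Function.Bijective (fun (s : (ObjectProperty.ι P).obj ⟨E, hE⟩ ⟶
      (ObjectProperty.ι P).obj (R.obj D)) => s ≫ adj.counit.app D)
    exact h

lemma five_contra {A B D B' Y : 𝒯}
    {a : A ⟶ B} {b : B ⟶ D} {c : D ⟶ A⟦(1:ℤ)⟧}
    (hT1 : Triangle.mk a b c ∈ distTriang 𝒯)
    {al : B' ⟶ B} {y : B ⟶ Y} {z : Y ⟶ B'⟦(1:ℤ)⟧}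
    (hT2 : Triangle.mk al y z ∈ distTriang 𝒯)
    {v : A ⟶ B'} {β : D ⟶ Y}
    (hv : v ≫ al = a) (hb : b ≫ β = y) (hc : c ≫ v⟦(1:ℤ)⟧' = β ≫ z)
    {E : 𝒯}
    (hv1 : Function.Bijective (fun (s : B' ⟶ E) => v ≫ s))
    (hv2 : Function.Bijective (fun (s : B'⟦(1:ℤ)⟧ ⟶ E) => v⟦(1:ℤ)⟧' ≫ s)) :
    Function.Bijective (fun (s : Y ⟶ E) => β ≫ s) := by
  have hab : a ≫ b = 0 := comp_distTriang_mor_zero₁₂ _ hT1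
  have hzal : z ≫ al⟦(1:ℤ)⟧' = 0 := comp_distTriang_mor_zero₃₁ _ hT2
  constructor
  · suffices hz : ∀ (s : Y ⟶ E), β ≫ s = 0 → s = 0 by
      intro s₁ s₂ hs
      dsimp at hs
      have := hz (s₁ - s₂) (by rw [Preadditive.comp_sub, hs, sub_self])
      rwa [sub_eq_zero] at this
    intro s hs
    have h1 : y ≫ s = 0 := by rw [← hb, assoc, hs, comp_zero]
    obtain ⟨s', hs'⟩ : ∃ s' : B'⟦(1:ℤ)⟧ ⟶ E, s = z ≫ s' :=
      Triangle.yoneda_exact₃ _ hT2 s h1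
    have h2 : c ≫ (v⟦(1:ℤ)⟧' ≫ s') = 0 := by
      rw [← assoc, hc, assoc, ← hs', hs]
    obtain ⟨q, hq⟩ : ∃ q : B⟦(1:ℤ)⟧ ⟶ E, v⟦(1:ℤ)⟧' ≫ s' = (-a⟦(1:ℤ)⟧') ≫ q :=
      Triangle.yoneda_exact₃ _ (rot_of_distTriang _ hT1) (v⟦(1:ℤ)⟧' ≫ s') h2
    have h3 : v⟦(1:ℤ)⟧' ≫ s' = v⟦(1:ℤ)⟧' ≫ (-(al⟦(1:ℤ)⟧' ≫ q)) := by
      rw [hq, ← hv]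
      simp [Functor.map_comp]
    have h4 : s' = -(al⟦(1:ℤ)⟧' ≫ q) := hv2.1 h3
    rw [hs', h4, Preadditive.comp_neg, ← assoc, hzal, zero_comp, neg_zero]
  · intro t
    have h0 : al ≫ b ≫ t = 0 := by
      apply hv1.1
      dsimp
      rw [comp_zero, ← assoc, ← assoc, hv, assoc, ← assoc, hab, zero_comp]
    obtain ⟨s₀, hs₀⟩ : ∃ s₀ : Y ⟶ E, b ≫ t = y ≫ s₀ :=
      Triangle.yoneda_exact₂ _ hT2 (b ≫ t) h0
    have h1 : b ≫ (t - β ≫ s₀) = 0 := by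
      rw [Preadditive.comp_sub, ← assoc, hb, ← hs₀, sub_self]
    obtain ⟨rr, hrr⟩ : ∃ rr : A⟦(1:ℤ)⟧ ⟶ E, t - β ≫ s₀ = c ≫ rr :=
      Triangle.yoneda_exact₃ _ hT1 (t - β ≫ s₀) h1
    obtain ⟨r', hr'⟩ := hv2.2 rr
    dsimp at hr'
    refine ⟨s₀ + z ≫ r', ?_⟩
    dsimp
    rw [Preadditive.comp_add, ← assoc, ← hc, assoc, hr', ← hrr]
    abel

lemma five_co {Cc A B₁ A₂ Z : 𝒯}
    {u : Cc ⟶ A} {v : A ⟶ B₁} {w : B₁ ⟶ Cc⟦(1:ℤ)⟧}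
    (hT1 : Triangle.mk u v w ∈ distTriang 𝒯)
    {ab : A₂ ⟶ A} {y : A ⟶ Z} {z : Z ⟶ A₂⟦(1:ℤ)⟧}
    (hT2 : Triangle.mk ab y z ∈ distTriang 𝒯)
    {p : A₂ ⟶ Cc} {γ : Z ⟶ B₁}
    (hp : p ≫ u = ab) (hy : y ≫ γ = v) (hw : z ≫ p⟦(1:ℤ)⟧' = γ ≫ w)
    {E : 𝒯}
    (hp1 : Function.Bijective (fun (s : E ⟶ A₂) => s ≫ p))
    (hp2 : Function.Bijective (fun (s : E ⟶ A₂⟦(1:ℤ)⟧) => s ≫ p⟦(1:ℤ)⟧')) :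
    Function.Bijective (fun (s : E ⟶ Z) => s ≫ γ) := by
  have hab : ab ≫ y = 0 := comp_distTriang_mor_zero₁₂ _ hT2
  have hwu : w ≫ u⟦(1:ℤ)⟧' = 0 := comp_distTriang_mor_zero₃₁ _ hT1
  constructor
  · suffices hz : ∀ (s : E ⟶ Z), s ≫ γ = 0 → s = 0 by
      intro s₁ s₂ hs
      dsimp at hs
      have := hz (s₁ - s₂) (by rw [Preadditive.sub_comp, hs, sub_self])
      rwa [sub_eq_zero] at this
    intro s hs
    have h2 : s ≫ z = 0 := by
      apply hp2.1
      dsimp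
      rw [assoc, hw, ← assoc, hs, zero_comp, zero_comp]
    obtain ⟨qq, hqq⟩ : ∃ qq : E ⟶ A, s = qq ≫ y :=
      Triangle.coyoneda_exact₃ _ hT2 s h2
    have h3 : qq ≫ v = 0 := by rw [← hy, ← assoc, ← hqq, hs]
    obtain ⟨g, hg⟩ : ∃ g : E ⟶ Cc, qq = g ≫ u :=
      Triangle.coyoneda_exact₂ _ hT1 qq h3
    obtain ⟨g₀, hg₀⟩ := hp1.2 g
    dsimp at hg₀
    rw [hqq, hg, ← hg₀]
    simp only [assoc]
    rw [reassoc_of% hp, hab, comp_zero]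
  · intro t
    obtain ⟨r, hr⟩ := hp2.2 (t ≫ w)
    dsimp at hr
    have h1 : r ≫ ab⟦(1:ℤ)⟧' = 0 := by
      rw [← hp, Functor.map_comp, ← assoc, hr, assoc, hwu, comp_zero]
    obtain ⟨s₁, hs₁⟩ : ∃ s₁ : E ⟶ Z, r = s₁ ≫ z :=
      Triangle.coyoneda_exact₁ _ hT2 r h1
    have h2 : (t - s₁ ≫ γ) ≫ w = 0 := by
      rw [Preadditive.sub_comp, assoc, ← hw, ← assoc, ← hs₁, hr, sub_self]
    obtain ⟨qq, hqq⟩ : ∃ qq : E ⟶ A, t - s₁ ≫ γ = qq ≫ v :=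
      Triangle.coyoneda_exact₃ _ hT1 (t - s₁ ≫ γ) h2
    refine ⟨s₁ + qq ≫ y, ?_⟩
    dsimp
    rw [Preadditive.add_comp, assoc, hy, ← hqq]
    abel

end Helpers

/-- A semiorthogonal decomposition `𝒯 = ⟨𝒜, ℬ⟩`: `Hom(B, A) = 0` for `B ∈ ℬ`, `A ∈ 𝒜`,
and every object `T` fits into a distinguished triangle `B ⟶ T ⟶ A ⟶ B⟦1⟧` with `B ∈ ℬ`
and `A ∈ 𝒜`. -/
def IsSOD {C : Type*} [Category.{v} C] [HasZeroObject C] [HasShift C ℤ] [Preadditive C]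
    [∀ (n : ℤ), (shiftFunctor C n).Additive] [Pretriangulated C]
    (A B : Triangulated.Subcategory C) : Prop :=
  (∀ (X Y : C), B.P X → A.P Y → ∀ (f : X ⟶ Y), f = 0) ∧
    ∀ (T : C), ∃ (X Y : C) (_ : B.P X) (_ : A.P Y) (f : X ⟶ T) (g : T ⟶ Y)
      (h : Y ⟶ X⟦(1 : ℤ)⟧), Triangle.mk f g h ∈ distTriang C

/--
Let `𝒯` be a pretriangulated category with a four-periodic
semiorthogonal decomposition `𝒯 = ⟨𝒜, ℬ⟩ = ⟨ℬ, 𝒞⟩ = ⟨𝒞, 𝒟⟩ = ⟨𝒟, 𝒜⟩`.  Let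
`i𝒜, iℬ, i𝒞, i𝒟` be the inclusions, `R𝒜` a right adjoint of `i𝒜`, `R𝒞` a right adjoint
of `i𝒞`, `Lℬ` a left adjoint of `iℬ`, and `L𝒟` a left adjoint of `i𝒟`.  Then for every
object `B` of `ℬ` there is a distinguished triangle
`(iℬ Lℬ i𝒜 R𝒜 iℬ)(B) ⟶ iℬ(B) ⟶ (iℬ Lℬ i𝒟 L𝒟 iℬ)(B) ⟶ (iℬ Lℬ i𝒜 R𝒜 iℬ)(B)⟦1⟧` in `𝒯`,
and for every object `A` of `𝒜` there is a distinguished triangle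
`(i𝒜 R𝒜 i𝒞 R𝒞 i𝒜)(A) ⟶ i𝒜(A) ⟶ (i𝒜 R𝒜 iℬ Lℬ i𝒜)(A) ⟶ (i𝒜 R𝒜 i𝒞 R𝒞 i𝒜)(A)⟦1⟧` in `𝒯`.
-/
theorem statement11
    {𝒯 : Type u} [Category.{v} 𝒯] [HasZeroObject 𝒯] [HasShift 𝒯 ℤ] [Preadditive 𝒯]
    [∀ (n : ℤ), (shiftFunctor 𝒯 n).Additive] [Pretriangulated 𝒯]
    (𝒜 ℬ 𝒞 𝒟 : Triangulated.Subcategory 𝒯)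
    [ObjectProperty.IsClosedUnderIsomorphisms 𝒜.P] [ObjectProperty.IsClosedUnderIsomorphisms ℬ.P]
    [ObjectProperty.IsClosedUnderIsomorphisms 𝒞.P] [ObjectProperty.IsClosedUnderIsomorphisms 𝒟.P]
    (h𝒜ℬ : IsSOD 𝒜 ℬ) (hℬ𝒞 : IsSOD ℬ 𝒞) (h𝒞𝒟 : IsSOD 𝒞 𝒟) (h𝒟𝒜 : IsSOD 𝒟 𝒜)
    (R𝒜 : 𝒯 ⥤ ObjectProperty.FullSubcategory 𝒜.P) (adjR𝒜 : ObjectProperty.ι 𝒜.P ⊣ R𝒜)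
    (R𝒞 : 𝒯 ⥤ ObjectProperty.FullSubcategory 𝒞.P) (adjR𝒞 : ObjectProperty.ι 𝒞.P ⊣ R𝒞)
    (Lℬ : 𝒯 ⥤ ObjectProperty.FullSubcategory ℬ.P) (adjLℬ : Lℬ ⊣ ObjectProperty.ι ℬ.P)
    (L𝒟 : 𝒯 ⥤ ObjectProperty.FullSubcategory 𝒟.P) (adjL𝒟 : L𝒟 ⊣ ObjectProperty.ι 𝒟.P) :
    (∀ (B : ObjectProperty.FullSubcategory ℬ.P),
      ∃ (f : (ObjectProperty.ι ℬ.P).obj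
              (Lℬ.obj ((ObjectProperty.ι 𝒜.P).obj
                (R𝒜.obj ((ObjectProperty.ι ℬ.P).obj B)))) ⟶
            (ObjectProperty.ι ℬ.P).obj B)
        (g : (ObjectProperty.ι ℬ.P).obj B ⟶
            (ObjectProperty.ι ℬ.P).obj
              (Lℬ.obj ((ObjectProperty.ι 𝒟.P).obj
                (L𝒟.obj ((ObjectProperty.ι ℬ.P).obj B)))))
        (h : (ObjectProperty.ι ℬ.P).obj
              (Lℬ.obj ((ObjectProperty.ι 𝒟.P).obj
                (L𝒟.obj ((ObjectProperty.ι ℬ.P).obj B)))) ⟶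
            ((ObjectProperty.ι ℬ.P).obj
              (Lℬ.obj ((ObjectProperty.ι 𝒜.P).obj
                (R𝒜.obj ((ObjectProperty.ι ℬ.P).obj B)))))⟦(1 : ℤ)⟧),
        Triangle.mk f g h ∈ distTriang 𝒯) ∧
    (∀ (A : ObjectProperty.FullSubcategory 𝒜.P),
      ∃ (f : (ObjectProperty.ι 𝒜.P).obj
              (R𝒜.obj ((ObjectProperty.ι 𝒞.P).obj
                (R𝒞.obj ((ObjectProperty.ι 𝒜.P).obj A)))) ⟶
            (ObjectProperty.ι 𝒜.P).obj A)
        (g : (ObjectProperty.ι 𝒜.P).obj A ⟶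
            (ObjectProperty.ι 𝒜.P).obj
              (R𝒜.obj ((ObjectProperty.ι ℬ.P).obj
                (Lℬ.obj ((ObjectProperty.ι 𝒜.P).obj A)))))
        (h : (ObjectProperty.ι 𝒜.P).obj
              (R𝒜.obj ((ObjectProperty.ι ℬ.P).obj
                (Lℬ.obj ((ObjectProperty.ι 𝒜.P).obj A)))) ⟶
            ((ObjectProperty.ι 𝒜.P).obj
              (R𝒜.obj ((ObjectProperty.ι 𝒞.P).obj
                (R𝒞.obj ((ObjectProperty.ι 𝒜.P).obj A)))))⟦(1 : ℤ)⟧),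
        Triangle.mk f g h ∈ distTriang 𝒯) := by
  constructor
  · intro B
    obtain ⟨A, D, hA𝒜, hD𝒟, a, b, c, hT1⟩ := h𝒟𝒜.2 ((ObjectProperty.ι ℬ.P).obj B)
    obtain ⟨Cc, B', hC𝒞, hB'ℬ, u, v, w, hT3⟩ := hℬ𝒞.2 A
    obtain ⟨al, hal⟩ : ∃ al : B' ⟶ (ObjectProperty.ι ℬ.P).obj B, a = v ≫ al :=
      Triangle.yoneda_exact₂ _ hT3 a (hℬ𝒞.1 _ _ hC𝒞 B.property _)
    obtain ⟨Y, y, z, hT2⟩ := distinguished_cocone_triangle al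
    have hYℬ : ℬ.P Y := ℬ.ext₃ _ hT2 hB'ℬ B.property
    obtain ⟨β, hβ₁, hβ₂⟩ := complete_distinguished_triangle_morphism _ _ hT1 hT2 v (𝟙 _)
      (by exact (comp_id _).trans hal)
    dsimp at hβ₁ hβ₂
    replace hβ₁ : b ≫ β = y := hβ₁.trans (id_comp _)
    have hv1 : ∀ E, ℬ.P E → Function.Bijective (fun (s : B' ⟶ E) => v ≫ s) :=
      fun E hE => contra_bij hT3 E (fun t => hℬ𝒞.1 _ _ hC𝒞 hE t)
        (fun t => hℬ𝒞.1 _ _ (𝒞.shift _ 1 hC𝒞) hE t)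
    have hv2 : ∀ E, ℬ.P E →
        Function.Bijective (fun (s : B'⟦(1:ℤ)⟧ ⟶ E) => v⟦(1:ℤ)⟧' ≫ s) :=
      fun E hE => contra_bij_shift hT3 E (fun t => hℬ𝒞.1 _ _ (𝒞.shift _ 1 hC𝒞) hE t)
        (fun t => hℬ𝒞.1 _ _ (𝒞.shift _ 1 (𝒞.shift _ 1 hC𝒞)) hE t)
    have βuniv : ∀ E, ℬ.P E → Function.Bijective (fun (s : Y ⟶ E) => β ≫ s) :=
      fun E hE => five_contra hT1 hT2 hal.symm hβ₁ hβ₂ (hv1 E hE) (hv2 E hE)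
    obtain ⟨eY, -⟩ := uniq_iso_contra ℬ.P hYℬ (Lℬ.obj D).property β (adjLℬ.unit.app D)
      βuniv (fun E hE => unit_bij Lℬ adjLℬ D E hE)
    have buniv : ∀ E, 𝒟.P E → Function.Bijective (fun (s : D ⟶ E) => b ≫ s) :=
      fun E hE => contra_bij hT1 E (fun t => h𝒟𝒜.1 _ _ hA𝒜 hE t)
        (fun t => h𝒟𝒜.1 _ _ (𝒜.shift _ 1 hA𝒜) hE t)
    obtain ⟨eD, -⟩ := uniq_iso_contra 𝒟.P hD𝒟 (L𝒟.obj _).property b (adjL𝒟.unit.app _)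
      buniv (fun E hE => unit_bij L𝒟 adjL𝒟 _ E hE)
    obtain ⟨eB', -⟩ := uniq_iso_contra ℬ.P hB'ℬ (Lℬ.obj A).property v (adjLℬ.unit.app A)
      hv1 (fun E hE => unit_bij Lℬ adjLℬ A E hE)
    have auniv : ∀ E, 𝒜.P E → Function.Bijective (fun (s : E ⟶ A) => s ≫ a) :=
      fun E hE => co_bij hT1 E (fun t => h𝒟𝒜.1 _ _ hE hD𝒟 t)
        (fun t => h𝒟𝒜.1 _ _ hE (𝒟.shift _ (-1) hD𝒟) t)
    obtain ⟨eA, -⟩ := uniq_iso_co 𝒜.P hA𝒜 (R𝒜.obj _).property a (adjR𝒜.counit.app _)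
      auniv (fun E hE => counit_bij R𝒜 adjR𝒜 _ E hE)
    refine ⟨(eB' ≪≫ (Lℬ ⋙ ObjectProperty.ι ℬ.P).mapIso eA).inv ≫ al,
      y ≫ (eY ≪≫ (Lℬ ⋙ ObjectProperty.ι ℬ.P).mapIso eD).hom,
      (eY ≪≫ (Lℬ ⋙ ObjectProperty.ι ℬ.P).mapIso eD).inv ≫ z ≫
        (shiftFunctor 𝒯 (1:ℤ)).map
          (eB' ≪≫ (Lℬ ⋙ ObjectProperty.ι ℬ.P).mapIso eA).hom,
      isomorphic_distinguished _ hT2 _ ?_⟩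
    exact Triangle.isoMk _ _
      (eB' ≪≫ (Lℬ ⋙ ObjectProperty.ι ℬ.P).mapIso eA).symm (Iso.refl _)
      (eY ≪≫ (Lℬ ⋙ ObjectProperty.ι ℬ.P).mapIso eD).symm
      (by exact comp_id _)
      (by exact ((assoc _ _ _).trans ((congrArg (fun t => _ ≫ t) (Iso.hom_inv_id _)).trans
        (comp_id _))).trans (id_comp _).symm)
      (by
        have key : ∀ {X₁ Y₁ W₁ V₁ : 𝒯} (F : X₁ ≅ Y₁) (z₁ : X₁ ⟶ W₁⟦(1:ℤ)⟧) (E : W₁ ≅ V₁),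
            (F.inv ≫ z₁ ≫ E.hom⟦(1:ℤ)⟧') ≫ E.inv⟦(1:ℤ)⟧' = F.inv ≫ z₁ := by
          intros
          simp [← Functor.map_comp]
        exact key _ _ _)
  · intro A
    obtain ⟨Cc, B₁, hC𝒞, hB₁ℬ, u', v', w', hT1'⟩ :=
      hℬ𝒞.2 ((ObjectProperty.ι 𝒜.P).obj A)
    obtain ⟨A₂, D₂, hA₂, hD₂, p, q, r, hT3'⟩ := h𝒟𝒜.2 Cc
    obtain ⟨Z, y', z', hT2'⟩ := distinguished_cocone_triangle (p ≫ u')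
    have hZ𝒜 : 𝒜.P Z := 𝒜.ext₃ _ hT2' hA₂ A.property
    obtain ⟨γ, hγ₁, hγ₂⟩ := complete_distinguished_triangle_morphism _ _ hT2' hT1' p (𝟙 _)
      (by exact comp_id _)
    dsimp at hγ₁ hγ₂
    replace hγ₁ : y' ≫ γ = v' := hγ₁.trans (id_comp _)
    have hp1 : ∀ E, 𝒜.P E → Function.Bijective (fun (s : E ⟶ A₂) => s ≫ p) :=
      fun E hE => co_bij hT3' E (fun t => h𝒟𝒜.1 _ _ hE hD₂ t)
        (fun t => h𝒟𝒜.1 _ _ hE (𝒟.shift _ (-1) hD₂) t)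
    have hp2 : ∀ E, 𝒜.P E →
        Function.Bijective (fun (s : E ⟶ A₂⟦(1:ℤ)⟧) => s ≫ p⟦(1:ℤ)⟧') :=
      fun E hE => co_bij_shift hT3' E (fun t => h𝒟𝒜.1 _ _ hE (𝒟.shift _ 1 hD₂) t)
        (fun t => h𝒟𝒜.1 _ _ hE (𝒟.shift _ (-1) (𝒟.shift _ 1 hD₂)) t)
    have γuniv : ∀ E, 𝒜.P E → Function.Bijective (fun (s : E ⟶ Z) => s ≫ γ) :=
      fun E hE => five_co hT1' hT2' rfl hγ₁ hγ₂ (hp1 E hE) (hp2 E hE)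
    obtain ⟨eZ, -⟩ := uniq_iso_co 𝒜.P hZ𝒜 (R𝒜.obj B₁).property γ (adjR𝒜.counit.app B₁)
      γuniv (fun E hE => counit_bij R𝒜 adjR𝒜 B₁ E hE)
    have uuniv : ∀ E, 𝒞.P E → Function.Bijective (fun (s : E ⟶ Cc) => s ≫ u') :=
      fun E hE => co_bij hT1' E (fun t => hℬ𝒞.1 _ _ hE hB₁ℬ t)
        (fun t => hℬ𝒞.1 _ _ hE (ℬ.shift _ (-1) hB₁ℬ) t)
    obtain ⟨eC, -⟩ := uniq_iso_co 𝒞.P hC𝒞 (R𝒞.obj _).property u' (adjR𝒞.counit.app _)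
      uuniv (fun E hE => counit_bij R𝒞 adjR𝒞 _ E hE)
    obtain ⟨eA₂, -⟩ := uniq_iso_co 𝒜.P hA₂ (R𝒜.obj Cc).property p (adjR𝒜.counit.app Cc)
      hp1 (fun E hE => counit_bij R𝒜 adjR𝒜 Cc E hE)
    have v'univ : ∀ E, ℬ.P E → Function.Bijective (fun (s : B₁ ⟶ E) => v' ≫ s) :=
      fun E hE => contra_bij hT1' E (fun t => hℬ𝒞.1 _ _ hC𝒞 hE t)
        (fun t => hℬ𝒞.1 _ _ (𝒞.shift _ 1 hC𝒞) hE t)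
    obtain ⟨eB₁, -⟩ := uniq_iso_contra ℬ.P hB₁ℬ (Lℬ.obj _).property v' (adjLℬ.unit.app _)
      v'univ (fun E hE => unit_bij Lℬ adjLℬ _ E hE)
    refine ⟨(eA₂ ≪≫ (R𝒜 ⋙ ObjectProperty.ι 𝒜.P).mapIso eC).inv ≫ (p ≫ u'),
      y' ≫ (eZ ≪≫ (R𝒜 ⋙ ObjectProperty.ι 𝒜.P).mapIso eB₁).hom,
      (eZ ≪≫ (R𝒜 ⋙ ObjectProperty.ι 𝒜.P).mapIso eB₁).inv ≫ z' ≫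
        (shiftFunctor 𝒯 (1:ℤ)).map
          (eA₂ ≪≫ (R𝒜 ⋙ ObjectProperty.ι 𝒜.P).mapIso eC).hom,
      isomorphic_distinguished _ hT2' _ ?_⟩
    exact Triangle.isoMk _ _
      (eA₂ ≪≫ (R𝒜 ⋙ ObjectProperty.ι 𝒜.P).mapIso eC).symm (Iso.refl _)
      (eZ ≪≫ (R𝒜 ⋙ ObjectProperty.ι 𝒜.P).mapIso eB₁).symm
      (by exact comp_id _)
      (by exact ((assoc _ _ _).trans ((congrArg (fun t => _ ≫ t) (Iso.hom_inv_id _)).trans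
        (comp_id _))).trans (id_comp _).symm)
      (by
        have key : ∀ {X₁ Y₁ W₁ V₁ : 𝒯} (F : X₁ ≅ Y₁) (z₁ : X₁ ⟶ W₁⟦(1:ℤ)⟧) (E : W₁ ≅ V₁),
            (F.inv ≫ z₁ ≫ E.hom⟦(1:ℤ)⟧') ≫ E.inv⟦(1:ℤ)⟧' = F.inv ≫ z₁ := by
          intros
          simp [← Functor.map_comp]
        exact key _ _ _)
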